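/- Approximate version of the BC equivalence: Suppose there exist ρ̂ ∈ B_W and M̂ with ||M̂||₂ ≤ ||M*||₂ < 1 such that E_ν[||M̂φ(s,a) − γE_{s'∼P(s,a)}[φ(s',π)]||²₂ + (ρ̂ᵀφ(s,a) − r(s,a))²] ≤ ε². Then, provided W ≥ ||ρ*||₂/(1 − ||M*||₂) and ||ρ̂||₂ ≤ ||ρ*||₂, we have max_{w₁∈B_W} min_{w₂∈B_W} ||w₂ᵀφ − T^π(w₁ᵀφ)||_{L²(ν)} ≤ ε(1+W), i.e., φ is ε(1+W)-approximately linear Bellman complete. -/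

import Mathlib

open Finset

lemma weighted_L2_triangle {Ω : Type} [Fintype Ω] (ν f g : Ω → ℝ)
    (hν : ∀ ω, 0 ≤ ν ω) :
    Real.sqrt (∑ ω, ν ω * (f ω + g ω) ^ 2) ≤
      Real.sqrt (∑ ω, ν ω * f ω ^ 2) + Real.sqrt (∑ ω, ν ω * g ω ^ 2) := by
  classical
  let u : EuclideanSpace ℝ Ω := WithLp.toLp 2 (fun ω => Real.sqrt (ν ω) * f ω)
  let v : EuclideanSpace ℝ Ω := WithLp.toLp 2 (fun ω => Real.sqrt (ν ω) * g ω)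
  have hnorm : ∀ (h : Ω → ℝ) (x : EuclideanSpace ℝ Ω), (∀ ω, x ω = Real.sqrt (ν ω) * h ω) →
      ‖x‖ = Real.sqrt (∑ ω, ν ω * h ω ^ 2) := by
    intro h x hx
    rw [EuclideanSpace.norm_eq]
    congr 1
    refine Finset.sum_congr rfl fun ω _ => ?_
    rw [hx ω, Real.norm_eq_abs, sq_abs, mul_pow, Real.sq_sqrt (hν ω)]
  have htri : ‖u + v‖ ≤ ‖u‖ + ‖v‖ := norm_add_le u v
  rw [hnorm (fun ω => f ω + g ω) (u + v) (fun ω => by rw [WithLp.ofLp_add]; simp only [u, v, Pi.add_apply]; ring),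
    hnorm f u (fun ω => rfl), hnorm g v (fun ω => rfl)] at htri
  exact htri

theorem approximate_linear_bc
    (d : ℕ) (Ω : Type) [Fintype Ω]
    (ν : Ω → ℝ) (φ nxt : Ω → EuclideanSpace ℝ (Fin d)) (r : Ω → ℝ)
    (γ W ε : ℝ) (hγ0 : 0 ≤ γ) (hγ1 : γ < 1) (hε : 0 ≤ ε)
    (hν0 : ∀ ω, 0 ≤ ν ω) (hν1 : ∑ ω, ν ω = 1)
    (hφ : ∀ ω, ‖φ ω‖ ≤ 1) (hr : ∀ ω, |r ω| ≤ 1)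
    (ρhat ρstar : EuclideanSpace ℝ (Fin d))
    (Mhat Mstar : EuclideanSpace ℝ (Fin d) →L[ℝ] EuclideanSpace ℝ (Fin d))
    (hMle : ‖Mhat‖ ≤ ‖Mstar‖) (hMstar : ‖Mstar‖ < 1)
    (hρle : ‖ρhat‖ ≤ ‖ρstar‖) (hρhatW : ‖ρhat‖ ≤ W)
    (hWlarge : ‖ρstar‖ / (1 - ‖Mstar‖) ≤ W)
    (hloss : ∑ ω, ν ω *
      (‖Mhat (φ ω) - γ • nxt ω‖ ^ 2 + ((inner ℝ ρhat (φ ω) : ℝ) - r ω) ^ 2)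
        ≤ ε ^ 2) :
    ∀ w₁ : EuclideanSpace ℝ (Fin d), ‖w₁‖ ≤ W →
      ∃ w₂ : EuclideanSpace ℝ (Fin d), ‖w₂‖ ≤ W ∧
        Real.sqrt (∑ ω, ν ω *
          ((inner ℝ w₂ (φ ω) : ℝ)
            - (r ω + γ * (inner ℝ w₁ (nxt ω) : ℝ))) ^ 2) ≤ ε * (1 + W) := by
  intro w₁ hw₁
  have hW0 : 0 ≤ W := le_trans (norm_nonneg _) hρhatW
  refine ⟨ρhat + ContinuousLinearMap.adjoint Mhat w₁, ?_, ?_⟩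
  · have h1 : ‖ρhat + ContinuousLinearMap.adjoint Mhat w₁‖ ≤
        ‖ρhat‖ + ‖Mhat‖ * ‖w₁‖ := by
      refine le_trans (norm_add_le _ _) (add_le_add le_rfl ?_)
      calc ‖ContinuousLinearMap.adjoint Mhat w₁‖ ≤ ‖ContinuousLinearMap.adjoint Mhat‖ * ‖w₁‖ :=
            ContinuousLinearMap.le_opNorm _ _
        _ = ‖Mhat‖ * ‖w₁‖ := by rw [LinearIsometryEquiv.norm_map ContinuousLinearMap.adjoint Mhat]
    have h2 : ‖ρhat‖ + ‖Mhat‖ * ‖w₁‖ ≤ ‖ρstar‖ + ‖Mstar‖ * W := by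
      gcongr
    have h3 : ‖ρstar‖ ≤ (1 - ‖Mstar‖) * W := by
      rw [div_le_iff₀ (by linarith)] at hWlarge
      linarith [hWlarge]
    linarith
  · -- pointwise decomposition
    set w₂ := ρhat + ContinuousLinearMap.adjoint Mhat w₁ with hw₂
    have hpt : ∀ ω, (inner ℝ w₂ (φ ω) : ℝ) - (r ω + γ * (inner ℝ w₁ (nxt ω) : ℝ))
        = ((inner ℝ ρhat (φ ω) : ℝ) - r ω)
          + (inner ℝ w₁ (Mhat (φ ω) - γ • nxt ω) : ℝ) := by
      intro ω
      rw [hw₂, inner_add_left, ContinuousLinearMap.adjoint_inner_left,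
        inner_sub_right, inner_smul_right]
      ring
    have key : Real.sqrt (∑ ω, ν ω *
          ((inner ℝ w₂ (φ ω) : ℝ) - (r ω + γ * (inner ℝ w₁ (nxt ω) : ℝ))) ^ 2)
        ≤ Real.sqrt (∑ ω, ν ω * ((inner ℝ ρhat (φ ω) : ℝ) - r ω) ^ 2)
          + Real.sqrt (∑ ω, ν ω * ((inner ℝ w₁ (Mhat (φ ω) - γ • nxt ω) : ℝ)) ^ 2) := by
      have := weighted_L2_triangle ν (fun ω => (inner ℝ ρhat (φ ω) : ℝ) - r ω)
        (fun ω => (inner ℝ w₁ (Mhat (φ ω) - γ • nxt ω) : ℝ)) hν0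
      convert this using 3 with ω
      rw [hpt ω]
    have hA : ∑ ω, ν ω * ((inner ℝ ρhat (φ ω) : ℝ) - r ω) ^ 2 ≤ ε ^ 2 := by
      refine le_trans (Finset.sum_le_sum fun ω _ => ?_) hloss
      have : (0:ℝ) ≤ ν ω * ‖Mhat (φ ω) - γ • nxt ω‖ ^ 2 :=
        mul_nonneg (hν0 ω) (sq_nonneg _)
      nlinarith [hν0 ω, sq_nonneg ((inner ℝ ρhat (φ ω) : ℝ) - r ω)]
    have hB : ∑ ω, ν ω * ((inner ℝ w₁ (Mhat (φ ω) - γ • nxt ω) : ℝ)) ^ 2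
        ≤ W ^ 2 * ε ^ 2 := by
      have hsum : ∑ ω, ν ω * ‖Mhat (φ ω) - γ • nxt ω‖ ^ 2 ≤ ε ^ 2 := by
        refine le_trans (Finset.sum_le_sum fun ω _ => ?_) hloss
        nlinarith [hν0 ω, sq_nonneg ((inner ℝ ρhat (φ ω) : ℝ) - r ω)]
      calc ∑ ω, ν ω * ((inner ℝ w₁ (Mhat (φ ω) - γ • nxt ω) : ℝ)) ^ 2
          ≤ ∑ ω, ν ω * (W ^ 2 * ‖Mhat (φ ω) - γ • nxt ω‖ ^ 2) := by
            refine Finset.sum_le_sum fun ω _ => ?_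
            refine mul_le_mul_of_nonneg_left ?_ (hν0 ω)
            have hcs : |(inner ℝ w₁ (Mhat (φ ω) - γ • nxt ω) : ℝ)|
                ≤ ‖w₁‖ * ‖Mhat (φ ω) - γ • nxt ω‖ := abs_real_inner_le_norm _ _
            have : |(inner ℝ w₁ (Mhat (φ ω) - γ • nxt ω) : ℝ)|
                ≤ W * ‖Mhat (φ ω) - γ • nxt ω‖ :=
              hcs.trans (mul_le_mul_of_nonneg_right hw₁ (norm_nonneg _))
            nlinarith [abs_nonneg (inner ℝ w₁ (Mhat (φ ω) - γ • nxt ω) : ℝ),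
              sq_abs (inner ℝ w₁ (Mhat (φ ω) - γ • nxt ω) : ℝ)]
        _ = W ^ 2 * ∑ ω, ν ω * ‖Mhat (φ ω) - γ • nxt ω‖ ^ 2 := by
            rw [Finset.mul_sum]; refine Finset.sum_congr rfl fun ω _ => by ring
        _ ≤ W ^ 2 * ε ^ 2 := by
            exact mul_le_mul_of_nonneg_left hsum (sq_nonneg W)
    have hsA : Real.sqrt (∑ ω, ν ω * ((inner ℝ ρhat (φ ω) : ℝ) - r ω) ^ 2) ≤ ε := by
      rw [show ε = Real.sqrt (ε ^ 2) by rw [Real.sqrt_sq hε]]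
      exact Real.sqrt_le_sqrt hA
    have hsB : Real.sqrt (∑ ω, ν ω * ((inner ℝ w₁ (Mhat (φ ω) - γ • nxt ω) : ℝ)) ^ 2)
        ≤ W * ε := by
      rw [show W * ε = Real.sqrt ((W * ε) ^ 2) by
        rw [Real.sqrt_sq (mul_nonneg hW0 hε)]]
      refine Real.sqrt_le_sqrt ?_
      calc _ ≤ W ^ 2 * ε ^ 2 := hB
        _ = (W * ε) ^ 2 := by ring
    calc _ ≤ _ := key
      _ ≤ ε + W * ε := add_le_add hsA hsB
      _ = ε * (1 + W) := by ring
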